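/- Let V, U, Y be real Hilbert spaces, let A : V → V*, B : U → V*, C : V → Y, K_B : V → U be bounded linear operators, and let B* : V → U be a bounded linear operator satisfying ⟨Bu, v⟩ = ⟪B*v, u⟫_U for all u ∈ U, v ∈ V. Assume the stabilizability condition: there is α > 0 with ⟨Aw, w⟩ + ⟨B(K_B w), w⟩ ≥ α‖w‖²_V for all w ∈ V. Suppose y, p ∈ V and ε₁ ∈ V* satisfy the adjoint equation ⟪Cy, Cv⟫_Y + ⟨Av, p⟩ = ⟨ε₁, v⟩ for all v ∈ V. Then, with m' := max{‖C‖, ‖K_B‖}, one has ‖p‖²_V ≤ (2/α²)·(‖ε₁‖²_{V*} + 2·m'²·(‖Cy‖²_Y + ‖B*p‖²_U)). -/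

import Mathlib

open RealInnerProductSpace

/-- The adjoint-variable bound (3.5) from the proof of Theorem 3.2. -/
theorem stmt_2 {V U Y : Type*}
    [NormedAddCommGroup V] [InnerProductSpace ℝ V] [CompleteSpace V]
    [NormedAddCommGroup U] [InnerProductSpace ℝ U] [CompleteSpace U]
    [NormedAddCommGroup Y] [InnerProductSpace ℝ Y] [CompleteSpace Y]
    (A : V →L[ℝ] V →L[ℝ] ℝ) (B : U →L[ℝ] V →L[ℝ] ℝ) (C : V →L[ℝ] Y)
    (KB : V →L[ℝ] U) (Bstar : V →L[ℝ] U)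
    (hBstar : ∀ (u : U) (v : V), B u v = ⟪Bstar v, u⟫)
    (α : ℝ) (hα : 0 < α)
    (hstab : ∀ w : V, A w w + B (KB w) w ≥ α * ‖w‖ ^ 2)
    (y p : V) (ε₁ : V →L[ℝ] ℝ)
    (hadj : ∀ v : V, ⟪C y, C v⟫ + A v p = ε₁ v) :
    ‖p‖ ^ 2 ≤ 2 / α ^ 2 *
      (‖ε₁‖ ^ 2 + 2 * (max ‖C‖ ‖KB‖) ^ 2 * (‖C y‖ ^ 2 + ‖Bstar p‖ ^ 2)) := by
  set m : ℝ := max ‖C‖ ‖KB‖ with hm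
  have hCm : ‖C‖ ≤ m := le_max_left _ _
  have hKm : ‖KB‖ ≤ m := le_max_right _ _
  have hm0 : 0 ≤ m := le_trans (norm_nonneg C) hCm
  set M : ℝ := ‖ε₁‖ + m * ‖C y‖ + m * ‖Bstar p‖ with hM
  have hM0 : 0 ≤ M := by positivity
  have key : α * ‖p‖ ^ 2 ≤ M * ‖p‖ := by
    have h1 := hstab p
    have h2 := hadj p
    have h3 := hBstar (KB p) p
    have b1 : ε₁ p ≤ ‖ε₁‖ * ‖p‖ := by
      calc ε₁ p ≤ |ε₁ p| := le_abs_self _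
      _ = ‖ε₁ p‖ := (Real.norm_eq_abs _).symm
      _ ≤ ‖ε₁‖ * ‖p‖ := ε₁.le_opNorm p
    have b2 : -⟪C y, C p⟫ ≤ ‖C y‖ * (‖C‖ * ‖p‖) := by
      have h := abs_real_inner_le_norm (C y) (C p)
      have h' : ‖C y‖ * ‖C p‖ ≤ ‖C y‖ * (‖C‖ * ‖p‖) :=
        mul_le_mul_of_nonneg_left (C.le_opNorm p) (norm_nonneg _)
      nlinarith [neg_abs_le (⟪C y, C p⟫ : ℝ)]
    have b3 : ⟪Bstar p, KB p⟫ ≤ ‖Bstar p‖ * (‖KB‖ * ‖p‖) := by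
      have h := real_inner_le_norm (Bstar p) (KB p)
      have h' : ‖Bstar p‖ * ‖KB p‖ ≤ ‖Bstar p‖ * (‖KB‖ * ‖p‖) :=
        mul_le_mul_of_nonneg_left (KB.le_opNorm p) (norm_nonneg _)
      linarith
    have hA : A p p = ε₁ p - ⟪C y, C p⟫ := by linarith
    have hB : B (KB p) p = ⟪Bstar p, KB p⟫ := h3
    have hCp : ‖C y‖ * (‖C‖ * ‖p‖) ≤ ‖C y‖ * (m * ‖p‖) := by
      apply mul_le_mul_of_nonneg_left _ (norm_nonneg _)
      exact mul_le_mul_of_nonneg_right hCm (norm_nonneg _)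
    have hKp : ‖Bstar p‖ * (‖KB‖ * ‖p‖) ≤ ‖Bstar p‖ * (m * ‖p‖) := by
      apply mul_le_mul_of_nonneg_left _ (norm_nonneg _)
      exact mul_le_mul_of_nonneg_right hKm (norm_nonneg _)
    have h4 : α * ‖p‖ ^ 2 ≤ ε₁ p - ⟪C y, C p⟫ + ⟪Bstar p, KB p⟫ := by linarith
    have h5 : M * ‖p‖ = ‖ε₁‖ * ‖p‖ + ‖C y‖ * (m * ‖p‖) + ‖Bstar p‖ * (m * ‖p‖) := by
      rw [hM]; ring
    linarith
  have hnp : α * ‖p‖ ≤ M := by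
    rcases eq_or_lt_of_le (norm_nonneg p) with h0 | h0
    · rw [← h0]; simpa using hM0
    · have := (mul_le_mul_iff_of_pos_right h0).mp (by nlinarith : (α * ‖p‖) * ‖p‖ ≤ M * ‖p‖)
      linarith
  have hsq : α ^ 2 * ‖p‖ ^ 2 ≤ M ^ 2 := by nlinarith [norm_nonneg p, hα.le]
  rw [div_mul_eq_mul_div, le_div_iff₀ (by positivity)]
  nlinarith [sq_nonneg (‖ε₁‖ - m * ‖C y‖ - m * ‖Bstar p‖), sq_nonneg (m * ‖C y‖ - m * ‖Bstar p‖), sq_nonneg α, norm_nonneg p]
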